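/- arXiv:1009.1723 — 3 statements merged into one kernel-verified Lean document; each statement's English description precedes it below -/
import Mathlib

section
/- Let r > 0, λ > 0, {v₀,v₁,w} a positive oriented orthonormal system, k₀ = √(1+r²)/r, and α(t) = √(1+r²) w + r cos(λt/r) v₁ + r sin(λt/r) v₀. Then for all t: D_t α̇(t) = |α̇(t)|ₘ k₀ (α(t) ×ₘ α̇(t)) and D_t(α ×ₘ α̇)(t) = −|α̇(t)|ₘ k₀ α̇(t), where for a vector field V along α with ⟨V(t), α(t)⟩ₘ = 0 the covariant derivative on ℍ is D_tV(t) = V̇(t) + ⟨V̇(t), α(t)⟩ₘ α(t), and |α̇|ₘ = √⟨α̇,α̇⟩ₘ. -/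
noncomputable section

open Real

/-- The Minkowski inner product on ℝ³. -/
def mink (v w : Fin 3 → ℝ) : ℝ := v 0 * w 0 + v 1 * w 1 - v 2 * w 2

/-- The twisted cross product on ℝ³. -/
def mcross (v w : Fin 3 → ℝ) : Fin 3 → ℝ :=
  ![v 2 * w 1 - v 1 * w 2, v 0 * w 2 - v 2 * w 0, v 0 * w 1 - v 1 * w 0]

/-- A positive oriented orthonormal system with respect to the Minkowski metric. -/
def posOrth (v₀ v₁ w : Fin 3 → ℝ) : Prop :=
  mink v₀ v₁ = 0 ∧ mink v₀ w = 0 ∧ mink v₁ w = 0 ∧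
  mink v₀ v₀ = 1 ∧ mink v₁ v₁ = 1 ∧ mink w w = -1 ∧
  mcross v₀ v₁ = w

/-- Membership in the hyperbolic plane ℍ ⊂ ℝ³. -/
def inH (x : Fin 3 → ℝ) : Prop := x 2 ^ 2 - x 0 ^ 2 - x 1 ^ 2 = 1 ∧ 0 < x 2

/-- The covariant derivative on ℍ of a tangent vector field `V` along a curve `γ` in ℍ:
`D_t V(t) = V̇(t) + ⟨V̇(t), γ(t)⟩ₘ γ(t)`. -/
def covDt (γ V : ℝ → Fin 3 → ℝ) : ℝ → Fin 3 → ℝ :=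
  fun t => deriv V t + mink (deriv V t) (γ t) • γ t

/- Auxiliary material -/

lemma mink_comm (a b : Fin 3 → ℝ) : mink a b = mink b a := by
  simp only [mink]; ring

lemma mcross_mcross (a b c : Fin 3 → ℝ) :
    mcross a (mcross b c) = mink a b • c - mink a c • b := by
  funext i
  fin_cases i <;>
    simp [mcross, mink, Pi.sub_apply, Pi.smul_apply, smul_eq_mul] <;> ring

lemma mcross_swap (a b : Fin 3 → ℝ) : mcross a b = -(mcross b a) := by
  funext i
  fin_cases i <;> simp [mcross, Pi.neg_apply] <;> ring

lemma mcross_expand (u v x : Fin 3 → ℝ) (p q s p' q' s' : ℝ) :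
    mcross (p • u + q • v + s • x) (p' • u + q' • v + s' • x) =
      (p * q' - q * p') • mcross u v + (p * s' - s * p') • mcross u x +
        (q * s' - s * q') • mcross v x := by
  funext i
  fin_cases i <;>
    simp [mcross, Pi.add_apply, Pi.smul_apply, smul_eq_mul] <;> ring

lemma mink_expand (u v x : Fin 3 → ℝ) (p q s p' q' s' : ℝ) :
    mink (p • u + q • v + s • x) (p' • u + q' • v + s' • x) =
      p * p' * mink u u + (p * q' + q * p') * mink u v + (p * s' + s * p') * mink u x +
        q * q' * mink v v + (q * s' + s * q') * mink v x + s * s' * mink x x := by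
  simp only [mink, Pi.add_apply, Pi.smul_apply, smul_eq_mul]; ring

/-- The velocity of α. -/
def Avel (r lam : ℝ) (v₀ v₁ w : Fin 3 → ℝ) : ℝ → Fin 3 → ℝ := fun s =>
  (0 : ℝ) • w + (-(lam * Real.sin (lam * s / r))) • v₁ + (lam * Real.cos (lam * s / r)) • v₀

/-- The acceleration of α. -/
def Aacc (r lam : ℝ) (v₀ v₁ w : Fin 3 → ℝ) : ℝ → Fin 3 → ℝ := fun s =>
  (0 : ℝ) • w + (-(lam ^ 2 / r * Real.cos (lam * s / r))) • v₁ +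
    (-(lam ^ 2 / r * Real.sin (lam * s / r))) • v₀

/-- The field α ×ₘ α̇. -/
def Bfield (r lam : ℝ) (v₀ v₁ w : Fin 3 → ℝ) : ℝ → Fin 3 → ℝ := fun s =>
  (-(r * lam)) • w + (-(Real.sqrt (1 + r ^ 2) * lam * Real.cos (lam * s / r))) • v₁ +
    (-(Real.sqrt (1 + r ^ 2) * lam * Real.sin (lam * s / r))) • v₀

/-- The derivative of α ×ₘ α̇. -/
def Bder (r lam : ℝ) (v₀ v₁ w : Fin 3 → ℝ) : ℝ → Fin 3 → ℝ := fun s =>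
  (0 : ℝ) • w + (Real.sqrt (1 + r ^ 2) * lam ^ 2 / r * Real.sin (lam * s / r)) • v₁ +
    (-(Real.sqrt (1 + r ^ 2) * lam ^ 2 / r * Real.cos (lam * s / r))) • v₀

/-- the covariant derivatives of α̇ and of α ×ₘ α̇ along the circle α. -/
theorem stmt_7 (r lam : ℝ) (hr : 0 < r) (hlam : 0 < lam) (v₀ v₁ w : Fin 3 → ℝ)
    (hsys : posOrth v₀ v₁ w) :
    let k₀ : ℝ := Real.sqrt (1 + r ^ 2) / r
    let α : ℝ → Fin 3 → ℝ := fun t =>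
      Real.sqrt (1 + r ^ 2) • w + (r * Real.cos (lam * t / r)) • v₁ +
        (r * Real.sin (lam * t / r)) • v₀
    ∀ t : ℝ,
      covDt α (deriv α) t =
        (Real.sqrt (mink (deriv α t) (deriv α t)) * k₀) • mcross (α t) (deriv α t) ∧
      covDt α (fun s => mcross (α s) (deriv α s)) t =
        -((Real.sqrt (mink (deriv α t) (deriv α t)) * k₀) • deriv α t) := by
  intro k₀ α t
  obtain ⟨h01, h0w, h1w, h00, h11, hww, hx⟩ := hsys
  have hr' : r ≠ 0 := ne_of_gt hr
  have hk : k₀ = Real.sqrt (1 + r ^ 2) / r := rfl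
  have ha2 : Real.sqrt (1 + r ^ 2) ^ 2 = 1 + r ^ 2 :=
    Real.sq_sqrt (by positivity)
  -- cross product relations
  have hwv1 : mcross w v₁ = v₀ := by
    rw [← hx, mcross_swap, mcross_mcross, mink_comm v₁ v₀, h01, h11]
    simp
  have hwv0 : mcross w v₀ = -v₁ := by
    rw [← hx, mcross_swap, mcross_mcross, h01, h00]
    simp
  have hv1v0 : mcross v₁ v₀ = -w := by
    rw [mcross_swap, hx]
  -- derivative of the angle
  have hθ : ∀ s : ℝ, HasDerivAt (fun u : ℝ => lam * u / r) (lam / r) s := by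
    intro s
    simpa using ((hasDerivAt_id s).const_mul lam).div_const r
  -- derivative of α
  have hα : ∀ s : ℝ, HasDerivAt α (Avel r lam v₀ v₁ w s) s := by
    intro s
    have h := ((hasDerivAt_const s (Real.sqrt (1 + r ^ 2) • w)).add
        ((((hθ s).cos).const_mul r).smul_const v₁)).add
        ((((hθ s).sin).const_mul r).smul_const v₀)
    refine h.congr_deriv ?_
    funext i
    simp only [Avel, Pi.add_apply, Pi.smul_apply, Pi.zero_apply, smul_eq_mul]
    field_simp
    ring
  have hdfun : deriv α = Avel r lam v₀ v₁ w := funext fun s => (hα s).deriv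
  -- derivative of Avel
  have hαacc : ∀ s : ℝ, HasDerivAt (Avel r lam v₀ v₁ w) (Aacc r lam v₀ v₁ w s) s := by
    intro s
    have h := ((hasDerivAt_const s ((0 : ℝ) • w)).add
        (((((hθ s).sin).const_mul lam).neg).smul_const v₁)).add
        ((((hθ s).cos).const_mul lam).smul_const v₀)
    refine h.congr_deriv ?_
    funext i
    simp only [Aacc, Pi.add_apply, Pi.smul_apply, Pi.zero_apply, smul_eq_mul]
    field_simp
    ring
  -- α ×ₘ α̇ in closed form
  have hβ : ∀ s : ℝ, mcross (α s) (Avel r lam v₀ v₁ w s) = Bfield r lam v₀ v₁ w s := by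
    intro s
    show mcross
        (Real.sqrt (1 + r ^ 2) • w + (r * Real.cos (lam * s / r)) • v₁ +
          (r * Real.sin (lam * s / r)) • v₀)
        ((0 : ℝ) • w + (-(lam * Real.sin (lam * s / r))) • v₁ +
          (lam * Real.cos (lam * s / r)) • v₀) = _
    rw [mcross_expand, hwv1, hwv0, hv1v0]
    funext i
    simp only [Bfield, Pi.add_apply, Pi.smul_apply, Pi.neg_apply, smul_eq_mul]
    have hp := Real.sin_sq_add_cos_sq (lam * s / r)
    linear_combination (-(r * lam * w i)) * hp
  -- derivative of Bfield
  have hβder : ∀ s : ℝ, HasDerivAt (Bfield r lam v₀ v₁ w) (Bder r lam v₀ v₁ w s) s := by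
    intro s
    have h := ((hasDerivAt_const s ((-(r * lam)) • w)).add
        (((((hθ s).cos).const_mul (Real.sqrt (1 + r ^ 2) * lam)).neg).smul_const v₁)).add
        (((((hθ s).sin).const_mul (Real.sqrt (1 + r ^ 2) * lam)).neg).smul_const v₀)
    refine h.congr_deriv ?_
    funext i
    simp only [Bder, Pi.add_apply, Pi.smul_apply, Pi.zero_apply, smul_eq_mul]
    field_simp
    ring
  -- scalar computations
  have hm2 : mink (Avel r lam v₀ v₁ w t) (Avel r lam v₀ v₁ w t) = lam ^ 2 := by
    show mink
        ((0 : ℝ) • w + (-(lam * Real.sin (lam * t / r))) • v₁ +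
          (lam * Real.cos (lam * t / r)) • v₀)
        ((0 : ℝ) • w + (-(lam * Real.sin (lam * t / r))) • v₁ +
          (lam * Real.cos (lam * t / r)) • v₀) = _
    rw [mink_expand, h00, h11, hww, mink_comm w v₁, h1w, mink_comm w v₀, h0w,
      mink_comm v₁ v₀, h01]
    have hp := Real.sin_sq_add_cos_sq (lam * t / r)
    linear_combination (lam ^ 2) * hp
  have hsq : Real.sqrt (lam ^ 2) = lam := Real.sqrt_sq hlam.le
  have hm1 : mink (Aacc r lam v₀ v₁ w t) (α t) = -lam ^ 2 := by
    show mink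
        ((0 : ℝ) • w + (-(lam ^ 2 / r * Real.cos (lam * t / r))) • v₁ +
          (-(lam ^ 2 / r * Real.sin (lam * t / r))) • v₀)
        (Real.sqrt (1 + r ^ 2) • w + (r * Real.cos (lam * t / r)) • v₁ +
          (r * Real.sin (lam * t / r)) • v₀) = _
    rw [mink_expand, h00, h11, hww, mink_comm w v₁, h1w, mink_comm w v₀, h0w,
      mink_comm v₁ v₀, h01]
    have hp := Real.sin_sq_add_cos_sq (lam * t / r)
    field_simp
    linear_combination (-(r * lam ^ 2)) * hp
  have hm3 : mink (Bder r lam v₀ v₁ w t) (α t) = 0 := by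
    show mink
        ((0 : ℝ) • w + (Real.sqrt (1 + r ^ 2) * lam ^ 2 / r * Real.sin (lam * t / r)) • v₁ +
          (-(Real.sqrt (1 + r ^ 2) * lam ^ 2 / r * Real.cos (lam * t / r))) • v₀)
        (Real.sqrt (1 + r ^ 2) • w + (r * Real.cos (lam * t / r)) • v₁ +
          (r * Real.sin (lam * t / r)) • v₀) = _
    rw [mink_expand, h00, h11, hww, mink_comm w v₁, h1w, mink_comm w v₀, h0w,
      mink_comm v₁ v₀, h01]
    ring
  constructor
  · -- first covariant derivative
    rw [hdfun]
    show deriv (Avel r lam v₀ v₁ w) t + mink (deriv (Avel r lam v₀ v₁ w) t) (α t) • α t =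
      (Real.sqrt (mink (Avel r lam v₀ v₁ w t) (Avel r lam v₀ v₁ w t)) * k₀) •
        mcross (α t) (Avel r lam v₀ v₁ w t)
    have hda : deriv (Avel r lam v₀ v₁ w) t = Aacc r lam v₀ v₁ w t := (hαacc t).deriv
    rw [hda, hm1, hm2, hsq, hβ t, hk]
    show Aacc r lam v₀ v₁ w t + (-lam ^ 2) •
        (Real.sqrt (1 + r ^ 2) • w + (r * Real.cos (lam * t / r)) • v₁ +
          (r * Real.sin (lam * t / r)) • v₀) = _
    funext i
    simp only [Aacc, Bfield, Pi.add_apply, Pi.smul_apply, Pi.zero_apply, smul_eq_mul]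
    field_simp
    linear_combination (lam ^ 2 *
      (Real.cos (lam * t / r) * v₁ i + Real.sin (lam * t / r) * v₀ i)) * ha2
  · -- second covariant derivative
    rw [hdfun]
    have hfun : (fun s => mcross (α s) (Avel r lam v₀ v₁ w s)) = Bfield r lam v₀ v₁ w :=
      funext hβ
    show deriv (fun s => mcross (α s) (Avel r lam v₀ v₁ w s)) t +
        mink (deriv (fun s => mcross (α s) (Avel r lam v₀ v₁ w s)) t) (α t) • α t =
      -((Real.sqrt (mink (Avel r lam v₀ v₁ w t) (Avel r lam v₀ v₁ w t)) * k₀) •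
        Avel r lam v₀ v₁ w t)
    rw [hfun]
    have hdb : deriv (Bfield r lam v₀ v₁ w) t = Bder r lam v₀ v₁ w t := (hβder t).deriv
    rw [hdb, hm3, hm2, hsq, hk]
    funext i
    simp only [Bder, Avel, Pi.add_apply, Pi.smul_apply, Pi.neg_apply, Pi.zero_apply,
      smul_eq_mul]
    field_simp
    ring
end
end

section
/- Let r > 0, {v₀,v₁,w} a positive oriented orthonormal system, k₀ = √(1+r²)/r, and α(t) = √(1+r²) w + r cos(2πt) v₁ + r sin(2πt) v₀. If W : ℝ → ℝ³ is a C², 1-periodic map with ⟨W(t), α(t)⟩ₘ = 0 for all t, solving the linearized equation 0 = −D_t²W + ⟨α̇,α̇⟩ₘ W − ⟨W, α̇⟩ₘ α̇ + |α̇|ₘ⁻¹ ⟨D_tW, α̇⟩ₘ k₀ (α ×ₘ α̇) + |α̇|ₘ k₀ (α ×ₘ D_tW), then W is a real linear combination of W₁(t) = α̇(t), W₂(t) = √(1+r²) v₁ + r cos(2πt) w, and W₃(t) = √(1+r²) v₀ + r sin(2πt) w. -/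
noncomputable section

open Real

/-- The linearization of the prescribed geodesic curvature operator along a curve α in ℍ:
`L W = −D_t²W + ⟨α̇,α̇⟩ₘ W − ⟨W,α̇⟩ₘ α̇ + |α̇|ₘ⁻¹ ⟨D_tW,α̇⟩ₘ k₀ (α ×ₘ α̇) + |α̇|ₘ k₀ (α ×ₘ D_tW)`. -/
def linOp (k₀ : ℝ) (α W : ℝ → Fin 3 → ℝ) (t : ℝ) : Fin 3 → ℝ :=
  -(covDt α (covDt α W) t) + mink (deriv α t) (deriv α t) • W t
    - mink (W t) (deriv α t) • deriv α t
    + ((Real.sqrt (mink (deriv α t) (deriv α t)))⁻¹ * mink (covDt α W t) (deriv α t) * k₀) •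
        mcross (α t) (deriv α t)
    + (Real.sqrt (mink (deriv α t) (deriv α t)) * k₀) • mcross (α t) (covDt α W t)

-- ######## auxiliary algebra ########

lemma mk_addl (u v z : Fin 3 → ℝ) : mink (u + v) z = mink u z + mink v z := by
  simp [mink]; ring
lemma mk_addr (u v z : Fin 3 → ℝ) : mink z (u + v) = mink z u + mink z v := by
  simp [mink]; ring
lemma mk_subl (u v z : Fin 3 → ℝ) : mink (u - v) z = mink u z - mink v z := by
  simp [mink]; ring
lemma mk_subr (u v z : Fin 3 → ℝ) : mink z (u - v) = mink z u - mink z v := by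
  simp [mink]; ring
lemma mk_negl (u z : Fin 3 → ℝ) : mink (-u) z = -mink u z := by
  simp [mink]; ring
lemma mk_negr (u z : Fin 3 → ℝ) : mink z (-u) = -mink z u := by
  simp [mink]; ring
lemma mk_smull (a : ℝ) (u z : Fin 3 → ℝ) : mink (a • u) z = a * mink u z := by
  simp [mink]; ring
lemma mk_smulr (a : ℝ) (u z : Fin 3 → ℝ) : mink z (a • u) = a * mink z u := by
  simp [mink]; ring
lemma mk_zl (z : Fin 3 → ℝ) : mink 0 z = 0 := by simp [mink]
lemma mk_zr (z : Fin 3 → ℝ) : mink z 0 = 0 := by simp [mink]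
lemma mk_comm (u v : Fin 3 → ℝ) : mink u v = mink v u := by simp [mink]; ring

lemma mc_addl (u v z : Fin 3 → ℝ) : mcross (u + v) z = mcross u z + mcross v z := by
  funext i; fin_cases i <;> simp [mcross] <;> ring
lemma mc_addr (u v z : Fin 3 → ℝ) : mcross z (u + v) = mcross z u + mcross z v := by
  funext i; fin_cases i <;> simp [mcross] <;> ring
lemma mc_subl (u v z : Fin 3 → ℝ) : mcross (u - v) z = mcross u z - mcross v z := by
  funext i; fin_cases i <;> simp [mcross] <;> ring
lemma mc_subr (u v z : Fin 3 → ℝ) : mcross z (u - v) = mcross z u - mcross z v := by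
  funext i; fin_cases i <;> simp [mcross] <;> ring
lemma mc_negl (u z : Fin 3 → ℝ) : mcross (-u) z = -mcross u z := by
  funext i; fin_cases i <;> simp [mcross] <;> ring
lemma mc_negr (u z : Fin 3 → ℝ) : mcross z (-u) = -mcross z u := by
  funext i; fin_cases i <;> simp [mcross] <;> ring
lemma mc_smull (a : ℝ) (u z : Fin 3 → ℝ) : mcross (a • u) z = a • mcross u z := by
  funext i; fin_cases i <;> simp [mcross] <;> ring
lemma mc_smulr (a : ℝ) (u z : Fin 3 → ℝ) : mcross z (a • u) = a • mcross z u := by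
  funext i; fin_cases i <;> simp [mcross] <;> ring
lemma mc_zl (z : Fin 3 → ℝ) : mcross 0 z = 0 := by
  funext i; fin_cases i <;> simp [mcross]
lemma mc_zr (z : Fin 3 → ℝ) : mcross z 0 = 0 := by
  funext i; fin_cases i <;> simp [mcross]
lemma mc_self (u : Fin 3 → ℝ) : mcross u u = 0 := by
  funext i; fin_cases i <;> simp [mcross] <;> ring
lemma mc_anti (u v : Fin 3 → ℝ) : mcross u v = -mcross v u := by
  funext i; fin_cases i <;> simp [mcross] <;> ring

/-- Completeness relation for a Minkowski-orthonormal frame. -/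
lemma complete_frame (v₀ v₁ w : Fin 3 → ℝ)
    (h00 : mink v₀ v₀ = 1) (h11 : mink v₁ v₁ = 1) (h01 : mink v₀ v₁ = 0)
    (hx : mcross v₀ v₁ = w) (u : Fin 3 → ℝ) :
    u = mink u v₀ • v₀ + mink u v₁ • v₁ - mink u w • w := by
  subst hx
  simp only [mink] at h00 h11 h01
  funext i
  fin_cases i <;> simp [mcross, mink, Fin.isValue]
  · linear_combination (-u 0 - v₁ 0*v₁ 2*u 2 + v₁ 0*v₁ 1*u 1 + v₁ 0*v₁ 0*u 0) * h00
      + (v₀ 2*v₀ 2*u 0 - v₀ 1*v₀ 1*u 0 - v₀ 0*v₀ 2*u 2 + v₀ 0*v₀ 1*u 1) * h11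
      + (-(v₀ 2*v₁ 2*u 0) + v₀ 2*v₁ 0*u 2 + v₀ 1*v₁ 1*u 0 - v₀ 1*v₁ 0*u 1 + v₀ 0*v₁ 2*u 2
          - v₀ 0*v₁ 1*u 1 - v₀ 0*v₁ 0*u 0) * h01
  · linear_combination (v₁ 2*v₁ 2*u 1 - v₁ 1*v₁ 2*u 2 + v₁ 0*v₁ 1*u 0 - v₁ 0*v₁ 0*u 1) * h00
      + (-u 1 - v₀ 1*v₀ 2*u 2 + v₀ 1*v₀ 1*u 1 + v₀ 0*v₀ 1*u 0) * h11
      + (-(v₀ 2*v₁ 2*u 1) + v₀ 2*v₁ 1*u 2 + v₀ 1*v₁ 2*u 2 - v₀ 1*v₁ 1*u 1 - v₀ 1*v₁ 0*u 0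
          - v₀ 0*v₁ 1*u 0 + v₀ 0*v₁ 0*u 1) * h01
  · linear_combination (v₁ 1*v₁ 2*u 1 - v₁ 1*v₁ 1*u 2 + v₁ 0*v₁ 2*u 0 - v₁ 0*v₁ 0*u 2) * h00
      + (-u 2 - v₀ 2*v₀ 2*u 2 + v₀ 1*v₀ 2*u 1 + v₀ 0*v₀ 2*u 0) * h11
      + (v₀ 2*v₁ 2*u 2 - v₀ 2*v₁ 1*u 1 - v₀ 2*v₁ 0*u 0 - v₀ 1*v₁ 2*u 1 + v₀ 1*v₁ 1*u 2
          - v₀ 0*v₁ 2*u 0 + v₀ 0*v₁ 0*u 2) * h01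

lemma table_1w (v₀ v₁ w : Fin 3 → ℝ)
    (h00 : mink v₀ v₀ = 1) (h11 : mink v₁ v₁ = 1) (h01 : mink v₀ v₁ = 0)
    (hx : mcross v₀ v₁ = w) : mcross v₁ w = -v₀ := by
  subst hx
  simp only [mink] at h00 h11 h01
  funext i
  fin_cases i <;> simp [mcross, Fin.isValue]
  · linear_combination (-v₀ 0) * h11 + (v₁ 0) * h01
  · linear_combination (-v₀ 1) * h11 + (v₁ 1) * h01
  · linear_combination (-v₀ 2) * h11 + (v₁ 2) * h01

lemma table_w0 (v₀ v₁ w : Fin 3 → ℝ)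
    (h00 : mink v₀ v₀ = 1) (h11 : mink v₁ v₁ = 1) (h01 : mink v₀ v₁ = 0)
    (hx : mcross v₀ v₁ = w) : mcross w v₀ = -v₁ := by
  subst hx
  simp only [mink] at h00 h11 h01
  funext i
  fin_cases i <;> simp [mcross, Fin.isValue]
  · linear_combination (-v₁ 0) * h00 + (v₀ 0) * h01
  · linear_combination (-v₁ 1) * h00 + (v₀ 1) * h01
  · linear_combination (-v₁ 2) * h00 + (v₀ 2) * h01

/-- derivative of `t ↦ mink (W t) v` for constant `v`. -/
lemma hasDerivAt_mink_const {W : ℝ → Fin 3 → ℝ} {W' : Fin 3 → ℝ} {t : ℝ}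
    (h : HasDerivAt W W' t) (v : Fin 3 → ℝ) :
    HasDerivAt (fun τ => mink (W τ) v) (mink W' v) t := by
  have h0 := hasDerivAt_pi.mp h 0
  have h1 := hasDerivAt_pi.mp h 1
  have h2 := hasDerivAt_pi.mp h 2
  exact ((h0.mul_const (v 0)).add (h1.mul_const (v 1))).sub (h2.mul_const (v 2))

/-- product rule for `t ↦ mink (U t) (V t)`. -/
lemma hasDerivAt_mink₂ {U V : ℝ → Fin 3 → ℝ} {U' V' : Fin 3 → ℝ} {t : ℝ}
    (hU : HasDerivAt U U' t) (hV : HasDerivAt V V' t) :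
    HasDerivAt (fun τ => mink (U τ) (V τ)) (mink U' (V t) + mink (U t) V') t := by
  have h0 := (hasDerivAt_pi.mp hU 0).mul (hasDerivAt_pi.mp hV 0)
  have h1 := (hasDerivAt_pi.mp hU 1).mul (hasDerivAt_pi.mp hV 1)
  have h2 := (hasDerivAt_pi.mp hU 2).mul (hasDerivAt_pi.mp hV 2)
  have := (h0.add h1).sub h2
  exact this.congr_deriv (by unfold mink; ring)


set_option maxHeartbeats 1600000 in
/-- every 1-periodic C² tangent solution of the linearized equation along α
is a real linear combination of W₁, W₂, W₃. -/
theorem stmt_9 (r : ℝ) (hr : 0 < r) (v₀ v₁ w : Fin 3 → ℝ) (hsys : posOrth v₀ v₁ w)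
    (W : ℝ → Fin 3 → ℝ) (hW : ContDiff ℝ 2 W) (hper : ∀ t : ℝ, W (t + 1) = W t)
    (htan : ∀ t : ℝ,
      mink (W t)
        (Real.sqrt (1 + r ^ 2) • w + (r * Real.cos (2 * Real.pi * t)) • v₁ +
          (r * Real.sin (2 * Real.pi * t)) • v₀) = 0)
    (hsol : ∀ t : ℝ,
      linOp (Real.sqrt (1 + r ^ 2) / r)
        (fun s => Real.sqrt (1 + r ^ 2) • w + (r * Real.cos (2 * Real.pi * s)) • v₁ +
          (r * Real.sin (2 * Real.pi * s)) • v₀) W t = 0) :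
    ∃ c₁ c₂ c₃ : ℝ, ∀ t : ℝ,
      W t = c₁ • deriv (fun s => Real.sqrt (1 + r ^ 2) • w +
              (r * Real.cos (2 * Real.pi * s)) • v₁ + (r * Real.sin (2 * Real.pi * s)) • v₀) t
        + c₂ • (Real.sqrt (1 + r ^ 2) • v₁ + (r * Real.cos (2 * Real.pi * t)) • w)
        + c₃ • (Real.sqrt (1 + r ^ 2) • v₀ + (r * Real.sin (2 * Real.pi * t)) • w) := by
  obtain ⟨h01, h0w, h1w, h00, h11, hww, hx⟩ := hsys
  have hπ := Real.pi_pos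
  have hrne : r ≠ 0 := ne_of_gt hr
  set S : ℝ := Real.sqrt (1 + r ^ 2) with hSdef
  have hS2 : S ^ 2 = 1 + r ^ 2 := Real.sq_sqrt (by positivity)
  have hSpos : 0 < S := Real.sqrt_pos.mpr (by positivity)
  set α : ℝ → Fin 3 → ℝ := fun s =>
    S • w + (r * Real.cos (2 * Real.pi * s)) • v₁ + (r * Real.sin (2 * Real.pi * s)) • v₀
    with hα
  -- multiplication tables
  have t10 : mink v₁ v₀ = 0 := (mk_comm _ _).trans h01
  have tw0 : mink w v₀ = 0 := (mk_comm _ _).trans h0w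
  have tw1 : mink w v₁ = 0 := (mk_comm _ _).trans h1w
  have x00 : mcross v₀ v₀ = 0 := mc_self _
  have x11 : mcross v₁ v₁ = 0 := mc_self _
  have xww : mcross w w = 0 := mc_self _
  have x01 : mcross v₀ v₁ = w := hx
  have x10 : mcross v₁ v₀ = -w := by rw [mc_anti, hx]
  have x1w : mcross v₁ w = -v₀ := table_1w v₀ v₁ w h00 h11 h01 hx
  have xw1 : mcross w v₁ = v₀ := by rw [mc_anti, x1w]; simp
  have xw0 : mcross w v₀ = -v₁ := table_w0 v₀ v₁ w h00 h11 h01 hx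
  have x0w : mcross v₀ w = v₁ := by rw [mc_anti, xw0]; simp
  -- derivative setup for W
  have hWdiff : Differentiable ℝ W := hW.differentiable (by norm_num)
  have hW1c : ContDiff ℝ 1 (deriv W) := by
    have h2 : ContDiff ℝ ((1 : WithTop ℕ∞) + 1) W := by
      rw [show ((1 : WithTop ℕ∞) + 1) = 2 by norm_num]; exact hW
    exact (contDiff_succ_iff_deriv.mp h2).2.2
  have hWd : ∀ t, HasDerivAt W (deriv W t) t := fun t => (hWdiff t).hasDerivAt
  have hWd' : ∀ t, HasDerivAt (deriv W) (deriv (deriv W) t) t :=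
    fun t => ((hW1c.differentiable (by norm_num)) t).hasDerivAt
  -- derivative of α
  set Ad : ℝ → Fin 3 → ℝ := fun τ =>
    (r * (-Real.sin (2 * Real.pi * τ) * (2 * Real.pi))) • v₁ +
      (r * (Real.cos (2 * Real.pi * τ) * (2 * Real.pi))) • v₀ with hAddef
  have hlin : ∀ τ : ℝ, HasDerivAt (fun s : ℝ => 2 * Real.pi * s) (2 * Real.pi) τ := by
    intro τ; simpa using (hasDerivAt_id τ).const_mul (2 * Real.pi)
  have hsin' : ∀ t : ℝ, HasDerivAt (fun τ => Real.sin (2 * Real.pi * τ))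
      (Real.cos (2 * Real.pi * t) * (2 * Real.pi)) t :=
    fun t => (Real.hasDerivAt_sin (2 * Real.pi * t)).comp t (hlin t)
  have hcos' : ∀ t : ℝ, HasDerivAt (fun τ => Real.cos (2 * Real.pi * τ))
      (-Real.sin (2 * Real.pi * t) * (2 * Real.pi)) t :=
    fun t => (Real.hasDerivAt_cos (2 * Real.pi * t)).comp t (hlin t)
  have hAhd : ∀ τ, HasDerivAt α (Ad τ) τ := by
    intro τ
    have hc : HasDerivAt (fun s => r * Real.cos (2 * Real.pi * s))
        (r * (-Real.sin (2 * Real.pi * τ) * (2 * Real.pi))) τ := (hcos' τ).const_mul r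
    have hs : HasDerivAt (fun s => r * Real.sin (2 * Real.pi * s))
        (r * (Real.cos (2 * Real.pi * τ) * (2 * Real.pi))) τ := (hsin' τ).const_mul r
    have h := ((hasDerivAt_const τ (S • w)).add (hc.smul_const v₁)).add (hs.smul_const v₀)
    rw [hα, hAddef]
    refine h.congr_deriv ?_
    module
  -- frame expansions
  have hW0t : ∀ t, W t = mink (W t) v₀ • v₀ + mink (W t) v₁ • v₁ - mink (W t) w • w :=
    fun t => complete_frame v₀ v₁ w h00 h11 h01 hx (W t)
  have hW1t : ∀ t, deriv W t =
      mink (deriv W t) v₀ • v₀ + mink (deriv W t) v₁ • v₁ - mink (deriv W t) w • w :=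
    fun t => complete_frame v₀ v₁ w h00 h11 h01 hx (deriv W t)
  have hW2t : ∀ t, deriv (deriv W) t =
      mink (deriv (deriv W) t) v₀ • v₀ + mink (deriv (deriv W) t) v₁ • v₁
        - mink (deriv (deriv W) t) w • w :=
    fun t => complete_frame v₀ v₁ w h00 h11 h01 hx (deriv (deriv W) t)
  -- tangency, scalar form
  have h0t : ∀ t, r * Real.sin (2 * Real.pi * t) * mink (W t) v₀
      + r * Real.cos (2 * Real.pi * t) * mink (W t) v₁ + S * mink (W t) w = 0 := by
    intro t
    have h := htan t
    simp only [mk_addr, mk_smulr] at h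
    linear_combination h
  have h1t : ∀ t, r * Real.sin (2 * Real.pi * t) * mink (deriv W t) v₀
      + r * Real.cos (2 * Real.pi * t) * mink (deriv W t) v₁ + S * mink (deriv W t) w
      + 2 * Real.pi * r * (Real.cos (2 * Real.pi * t) * mink (W t) v₀
          - Real.sin (2 * Real.pi * t) * mink (W t) v₁) = 0 := by
    intro t
    have hd : HasDerivAt (fun τ => mink (W τ) (α τ))
        (mink (deriv W t) (α t) + mink (W t) (Ad t)) t := hasDerivAt_mink₂ (hWd t) (hAhd t)
    have hzero : (fun τ => mink (W τ) (α τ)) = fun _ => (0 : ℝ) := by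
      funext τ; simp only [hα]; exact htan τ
    have h0d : HasDerivAt (fun τ => mink (W τ) (α τ)) 0 t := by
      rw [hzero]; exact hasDerivAt_const t 0
    have huniq := hd.unique h0d
    simp only [hα, hAddef, mk_addr, mk_smulr] at huniq
    linear_combination huniq
  -- the scalar coordinate functions g (normal component) and f (tangential component)
  obtain ⟨g, hgdef⟩ : ∃ g : ℝ → ℝ, g = fun τ =>
      S * Real.sin (2 * Real.pi * τ) * mink (W τ) v₀
        + S * Real.cos (2 * Real.pi * τ) * mink (W τ) v₁ + r * mink (W τ) w := ⟨_, rfl⟩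
  obtain ⟨g1, hg1def⟩ : ∃ g1 : ℝ → ℝ, g1 = fun τ =>
      S * (Real.cos (2 * Real.pi * τ) * (2 * Real.pi)) * mink (W τ) v₀
        + S * Real.sin (2 * Real.pi * τ) * mink (deriv W τ) v₀
        + (S * (-Real.sin (2 * Real.pi * τ) * (2 * Real.pi)) * mink (W τ) v₁
            + S * Real.cos (2 * Real.pi * τ) * mink (deriv W τ) v₁)
        + r * mink (deriv W τ) w := ⟨_, rfl⟩
  obtain ⟨g2, hg2def⟩ : ∃ g2 : ℝ → ℝ, g2 = fun τ =>
      -(2 * Real.pi) ^ 2 * (S * Real.sin (2 * Real.pi * τ) * mink (W τ) v₀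
          + S * Real.cos (2 * Real.pi * τ) * mink (W τ) v₁)
        + 2 * (2 * Real.pi) * (S * Real.cos (2 * Real.pi * τ) * mink (deriv W τ) v₀
            - S * Real.sin (2 * Real.pi * τ) * mink (deriv W τ) v₁)
        + (S * Real.sin (2 * Real.pi * τ) * mink (deriv (deriv W) τ) v₀
            + S * Real.cos (2 * Real.pi * τ) * mink (deriv (deriv W) τ) v₁
            + r * mink (deriv (deriv W) τ) w) := ⟨_, rfl⟩
  obtain ⟨f, hfdef⟩ : ∃ f : ℝ → ℝ, f = fun τ =>
      Real.cos (2 * Real.pi * τ) * mink (W τ) v₀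
        - Real.sin (2 * Real.pi * τ) * mink (W τ) v₁ := ⟨_, rfl⟩
  obtain ⟨f1, hf1def⟩ : ∃ f1 : ℝ → ℝ, f1 = fun τ =>
      -Real.sin (2 * Real.pi * τ) * (2 * Real.pi) * mink (W τ) v₀
        + Real.cos (2 * Real.pi * τ) * mink (deriv W τ) v₀
        - (Real.cos (2 * Real.pi * τ) * (2 * Real.pi) * mink (W τ) v₁
            + Real.sin (2 * Real.pi * τ) * mink (deriv W τ) v₁) := ⟨_, rfl⟩
  obtain ⟨f2, hf2def⟩ : ∃ f2 : ℝ → ℝ, f2 = fun τ =>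
      -(2 * Real.pi) ^ 2 * (Real.cos (2 * Real.pi * τ) * mink (W τ) v₀
          - Real.sin (2 * Real.pi * τ) * mink (W τ) v₁)
        - 2 * (2 * Real.pi) * (Real.sin (2 * Real.pi * τ) * mink (deriv W τ) v₀
            + Real.cos (2 * Real.pi * τ) * mink (deriv W τ) v₁)
        + (Real.cos (2 * Real.pi * τ) * mink (deriv (deriv W) τ) v₀
            - Real.sin (2 * Real.pi * τ) * mink (deriv (deriv W) τ) v₁) := ⟨_, rfl⟩
  have hgd : ∀ t, HasDerivAt g (g1 t) t := by
    intro t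
    rw [hgdef, hg1def]
    have c1 := ((hsin' t).const_mul S).mul (hasDerivAt_mink_const (hWd t) v₀)
    have c2 := ((hcos' t).const_mul S).mul (hasDerivAt_mink_const (hWd t) v₁)
    have c3 := (hasDerivAt_mink_const (hWd t) w).const_mul r
    exact ((c1.add c2).add c3).congr_deriv (by ring)
  have hg1d : ∀ t, HasDerivAt g1 (g2 t) t := by
    intro t
    rw [hg1def, hg2def]
    have c1 := (((hcos' t).mul_const (2 * Real.pi)).const_mul S).mul
      (hasDerivAt_mink_const (hWd t) v₀)
    have c2 := ((hsin' t).const_mul S).mul (hasDerivAt_mink_const (hWd' t) v₀)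
    have c3 := ((((hsin' t).neg).mul_const (2 * Real.pi)).const_mul S).mul
      (hasDerivAt_mink_const (hWd t) v₁)
    have c4 := ((hcos' t).const_mul S).mul (hasDerivAt_mink_const (hWd' t) v₁)
    have c5 := (hasDerivAt_mink_const (hWd' t) w).const_mul r
    exact (((c1.add c2).add (c3.add c4)).add c5).congr_deriv (by simp only [Pi.neg_apply]; ring)
  have hfd : ∀ t, HasDerivAt f (f1 t) t := by
    intro t
    rw [hfdef, hf1def]
    have c1 := (hcos' t).mul (hasDerivAt_mink_const (hWd t) v₀)
    have c2 := (hsin' t).mul (hasDerivAt_mink_const (hWd t) v₁)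
    exact (c1.sub c2).congr_deriv (by ring)
  have hf1d : ∀ t, HasDerivAt f1 (f2 t) t := by
    intro t
    rw [hf1def, hf2def]
    have c1 := (((hsin' t).neg).mul_const (2 * Real.pi)).mul
      (hasDerivAt_mink_const (hWd t) v₀)
    have c2 := (hcos' t).mul (hasDerivAt_mink_const (hWd' t) v₀)
    have c3 := (((hcos' t).mul_const (2 * Real.pi)).mul
      (hasDerivAt_mink_const (hWd t) v₁))
    have c4 := (hsin' t).mul (hasDerivAt_mink_const (hWd' t) v₁)
    exact ((c1.add c2).sub (c3.add c4)).congr_deriv (by simp only [Pi.neg_apply]; ring)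
  -- the two scalar ODEs obtained from the linearized equation
  have key : ∀ t : ℝ, g2 t + (2 * Real.pi) ^ 2 * g t = 0
      ∧ f2 t + S * (2 * Real.pi) * g1 t = 0 := by
    intro t
    have h := hsol t
    simp only [linOp] at h
    rw [show deriv α t = Ad t from (hAhd t).deriv] at h
    have hsq : Real.sqrt (mink (Ad t) (Ad t)) = 2 * Real.pi * r := by
      have hmm : mink (Ad t) (Ad t) = (2 * Real.pi * r) ^ 2 := by
        simp only [hAddef, mk_addl, mk_addr, mk_smull, mk_smulr, h00, h11, h01, t10]
        linear_combination (2 * Real.pi * r) ^ 2 * Real.sin_sq_add_cos_sq (2 * Real.pi * t)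
      rw [hmm]
      exact Real.sqrt_sq (by positivity)
    rw [hsq] at h
    have hDWad : mink (covDt α W t) (Ad t) = 2 * Real.pi * r
        * (Real.cos (2 * Real.pi * t) * mink (deriv W t) v₀
            - Real.sin (2 * Real.pi * t) * mink (deriv W t) v₁) := by
      rw [show covDt α W t = deriv W t + mink (deriv W t) (α t) • α t from rfl]
      rw [hW1t t]
      simp only [hα, hAddef, mk_addl, mk_addr, mk_subl, mk_subr, mk_smull, mk_smulr,
        h00, h11, h01, t10, h0w, h1w, tw0, tw1, hww]
      ring
    rw [hDWad] at h
    rw [inv_mul_cancel_left₀ (show (2 * Real.pi * r) ≠ 0 by positivity)] at h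
    rw [show (2 * Real.pi * r) * (S / r) = 2 * Real.pi * S by field_simp] at h
    have hDval : deriv (covDt α W) t = deriv (deriv W) t
        + (mink (deriv W t) (α t) • Ad t
            + (mink (deriv (deriv W) t) (α t) + mink (deriv W t) (Ad t)) • α t) := by
      refine HasDerivAt.deriv ?_
      have hq : HasDerivAt (fun τ => mink (deriv W τ) (α τ))
          (mink (deriv (deriv W) t) (α t) + mink (deriv W t) (Ad t)) t :=
        hasDerivAt_mink₂ (hWd' t) (hAhd t)
      exact (hWd' t).add (hq.smul (hAhd t))
    rw [show covDt α (covDt α W) t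
        = deriv (covDt α W) t + mink (deriv (covDt α W) t) (α t) • α t from rfl] at h
    rw [hDval] at h
    rw [show covDt α W t = deriv W t + mink (deriv W t) (α t) • α t from rfl] at h
    rw [hW2t t] at h
    rw [hW1t t] at h
    rw [hW0t t] at h
    simp only [hα, hAddef] at h
    have he0 := congrArg (fun v => mink v v₀) h
    have he1 := congrArg (fun v => mink v v₁) h
    have he2 := congrArg (fun v => mink v w) h
    simp only [mk_addl, mk_addr, mk_subl, mk_subr, mk_negl, mk_negr, mk_smull, mk_smulr,
      mk_zl, mk_zr, mc_addl, mc_addr, mc_subl, mc_subr, mc_negl, mc_negr, mc_smull, mc_smulr,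
      mc_zl, mc_zr, x00, x01, x0w, x10, x11, x1w, xw0, xw1, xww,
      h00, h01, h0w, t10, h11, h1w, tw0, tw1, hww, smul_neg, smul_zero, neg_neg]
      at he0 he1 he2
    constructor
    · have hkeyg : r * (g2 t + (2 * Real.pi) ^ 2 * g t) = 0 := by
        simp only [hg2def, hgdef]
        linear_combination he2
          + (-(mink (deriv (deriv W) t) w)*S*S*r*r
              - (mink (deriv (deriv W) t) v₁)*(Real.cos (2*π*t))*S*r*r*r
              - (mink (deriv (deriv W) t) v₀)*(Real.sin (2*π*t))*S*r*r*r
              + (mink (deriv W t) v₁)*(Real.sin (2*π*t))*S*r*r*(2*π)*r⁻¹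
              + (mink (deriv W t) v₁)*(Real.sin (2*π*t))*S*r*r*r*(2*π)
              - (mink (deriv W t) v₀)*(Real.cos (2*π*t))*S*r*r*(2*π)*r⁻¹
              - (mink (deriv W t) v₀)*(Real.cos (2*π*t))*S*r*r*r*(2*π)
              - (mink (W t) w)*r*r*(2*π)*(2*π)) * Real.sin_sq_add_cos_sq (2 * Real.pi * t)
          + (-(mink (deriv (deriv W) t) w) + (mink (deriv (deriv W) t) w)*S*S
              + (mink (deriv (deriv W) t) v₁)*(Real.cos (2*π*t))*S*r
              + (mink (deriv (deriv W) t) v₀)*(Real.sin (2*π*t))*S*r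
              - (mink (deriv W t) v₁)*(Real.sin (2*π*t))*S*r*(2*π)
              + (mink (deriv W t) v₀)*(Real.cos (2*π*t))*S*r*(2*π)) * hS2
          + ((mink (deriv W t) v₁)*(Real.sin (2*π*t))*S*r*(2*π)
              - (mink (deriv W t) v₀)*(Real.cos (2*π*t))*S*r*(2*π)) * (mul_inv_cancel₀ hrne)
      rcases mul_eq_zero.mp hkeyg with h' | h'
      · exact absurd h' hrne
      · exact h'
    · simp only [hf2def, hg1def]
      linear_combination (-(Real.cos (2*π*t))) * he0 + (Real.sin (2*π*t)) * he1
        + (2*π*r) * (h1t t)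
        + (-(mink (deriv W t) v₁)*(Real.cos (2*π*t))*r*r*(2*π)
            - (mink (deriv W t) v₀)*(Real.sin (2*π*t))*r*r*(2*π))
            * Real.sin_sq_add_cos_sq (2 * Real.pi * t)
        + (2*(mink (deriv W t) v₁)*(Real.cos (2*π*t))*(2*π)
            + 2*(mink (deriv W t) v₀)*(Real.sin (2*π*t))*(2*π)
            - (mink (W t) v₁)*(Real.sin (2*π*t))*(2*π)*(2*π)
            + (mink (W t) v₀)*(Real.cos (2*π*t))*(2*π)*(2*π)) * hS2
  -- solve the harmonic oscillator for g
  obtain ⟨Ac, hAcdef⟩ : ∃ a : ℝ, a = g 0 := ⟨_, rfl⟩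
  obtain ⟨Bc, hBcdef⟩ : ∃ b : ℝ, b = g1 0 / (2 * Real.pi) := ⟨_, rfl⟩
  have hgval : ∀ t, g t = Ac * Real.cos (2 * Real.pi * t) + Bc * Real.sin (2 * Real.pi * t) := by
    obtain ⟨φ, hφdef⟩ : ∃ φ : ℝ → ℝ, φ = fun τ =>
        g τ - (Ac * Real.cos (2 * Real.pi * τ) + Bc * Real.sin (2 * Real.pi * τ)) := ⟨_, rfl⟩
    obtain ⟨φ1, hφ1def⟩ : ∃ φ1 : ℝ → ℝ, φ1 = fun τ =>
        g1 τ - (Ac * (-Real.sin (2 * Real.pi * τ) * (2 * Real.pi))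
          + Bc * (Real.cos (2 * Real.pi * τ) * (2 * Real.pi))) := ⟨_, rfl⟩
    have hφd : ∀ t, HasDerivAt φ (φ1 t) t := by
      intro t
      rw [hφdef, hφ1def]
      exact (hgd t).sub (((hcos' t).const_mul Ac).add ((hsin' t).const_mul Bc))
    have hφ1d : ∀ t, HasDerivAt φ1 (-(2 * Real.pi) ^ 2 * φ t) t := by
      intro t
      rw [hφ1def]
      have c1 := (((hsin' t).neg).mul_const (2 * Real.pi)).const_mul Ac
      have c2 := (((hcos' t)).mul_const (2 * Real.pi)).const_mul Bc
      refine ((hg1d t).sub (c1.add c2)).congr_deriv (Eq.symm ?_)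
      rw [hφdef]
      have hk := (key t).1
      linear_combination -hk
    obtain ⟨E, hEdef⟩ : ∃ E : ℝ → ℝ, E = fun τ =>
        φ1 τ ^ 2 + (2 * Real.pi) ^ 2 * φ τ ^ 2 := ⟨_, rfl⟩
    have hEd : ∀ t, HasDerivAt E 0 t := by
      intro t
      rw [hEdef]
      have c1 := (hφ1d t).pow 2
      have c2 := ((hφd t).pow 2).const_mul ((2 * Real.pi) ^ 2)
      refine (c1.add c2).congr_deriv (Eq.symm ?_)
      push_cast
      ring
    have hEconst : ∀ t, E t = E 0 :=
      fun t => is_const_of_deriv_eq_zero (fun x => (hEd x).differentiableAt)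
        (fun x => (hEd x).deriv) t 0
    have hφ0 : φ 0 = 0 := by rw [hφdef]; simp [hAcdef]
    have hφ10 : φ1 0 = 0 := by
      rw [hφ1def]
      simp only [mul_zero, Real.sin_zero, Real.cos_zero]
      rw [hBcdef]
      field_simp
      ring
    have hE0 : E 0 = 0 := by rw [hEdef]; simp [hφ0, hφ10]
    intro t
    have hEt := (hEconst t).trans hE0
    rw [hEdef] at hEt
    simp only at hEt
    have hp : (0:ℝ) < (2 * Real.pi) ^ 2 := by positivity
    have hφsq : φ t ^ 2 = 0 := by nlinarith [sq_nonneg (φ1 t), sq_nonneg (φ t)]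
    have hz := pow_eq_zero_iff (n := 2) (by norm_num) |>.mp hφsq
    rw [hφdef] at hz
    simp only at hz
    linarith [hz]
  -- solve the inhomogeneous linear equation for f
  obtain ⟨K, hKdef⟩ : ∃ k : ℝ, k = f1 0 + S * (2 * Real.pi) * g 0 := ⟨_, rfl⟩
  have hf1val : ∀ t, f1 t + S * (2 * Real.pi) * g t = K := by
    have hψd : ∀ t, HasDerivAt (fun τ => f1 τ + S * (2 * Real.pi) * g τ) 0 t := by
      intro t
      have hc := (hf1d t).add ((hgd t).const_mul (S * (2 * Real.pi)))
      refine hc.congr_deriv (Eq.symm ?_)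
      have hk := (key t).2
      linarith
    intro t
    rw [hKdef]
    exact is_const_of_deriv_eq_zero (fun x => (hψd x).differentiableAt)
      (fun x => (hψd x).deriv) t 0
  have hfval : ∀ t, f t = f 0 + K * t - S * Ac * Real.sin (2 * Real.pi * t)
      + S * Bc * (Real.cos (2 * Real.pi * t) - 1) := by
    have hud : ∀ t, HasDerivAt (fun τ => f τ - (f 0 + K * τ
        - S * Ac * Real.sin (2 * Real.pi * τ)
        + S * Bc * (Real.cos (2 * Real.pi * τ) - 1))) 0 t := by
      intro t
      have hrhs : HasDerivAt (fun τ => f 0 + K * τ - S * Ac * Real.sin (2 * Real.pi * τ)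
          + S * Bc * (Real.cos (2 * Real.pi * τ) - 1))
          (0 + K * 1 - S * Ac * (Real.cos (2 * Real.pi * t) * (2 * Real.pi))
            + S * Bc * (-Real.sin (2 * Real.pi * t) * (2 * Real.pi))) t := by
        have c0 : HasDerivAt (fun τ : ℝ => f 0 + K * τ) (0 + K * 1) t :=
          (hasDerivAt_const t (f 0)).add ((hasDerivAt_id t).const_mul K)
        have c1 := (hsin' t).const_mul (S * Ac)
        have c2 := ((hcos' t).sub_const 1).const_mul (S * Bc)
        exact (c0.sub c1).add c2
      have hc := (hfd t).sub hrhs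
      refine hc.congr_deriv (Eq.symm ?_)
      have h1 := hf1val t
      have h2 := hgval t
      linear_combination -h1 + S * (2 * Real.pi) * h2
    have hconst := fun t => is_const_of_deriv_eq_zero (fun x => (hud x).differentiableAt)
        (fun x => (hud x).deriv) t 0
    intro t
    have h := hconst t
    simp only [mul_zero, mul_one, Real.sin_zero, Real.cos_zero] at h
    linear_combination h
  have hK0 : K = 0 := by
    have hWper : W 1 = W 0 := by simpa using hper 0
    have hf10 : f 1 = f 0 := by
      rw [hfdef]
      simp only [mul_one, mul_zero, Real.sin_zero, Real.cos_zero, Real.sin_two_pi,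
        Real.cos_two_pi, hWper]
      try ring
    have h := hfval 1
    rw [hf10] at h
    simp only [mul_one, Real.sin_two_pi, Real.cos_two_pi] at h
    linarith
  -- conclusion
  refine ⟨(f 0 - S * Bc) / (2 * Real.pi * r), Ac, Bc, ?_⟩
  intro t
  have hc1 : ((f 0 - S * Bc) / (2 * Real.pi * r)) * (2 * Real.pi * r) = f 0 - S * Bc :=
    div_mul_cancel₀ _ (by positivity)
  have hcf : Real.cos (2 * Real.pi * t) * mink (W t) v₀
      - Real.sin (2 * Real.pi * t) * mink (W t) v₁
      = (f 0 - S * Bc) - S * Ac * Real.sin (2 * Real.pi * t)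
        + S * Bc * Real.cos (2 * Real.pi * t) := by
    have hft : f t = Real.cos (2 * Real.pi * t) * mink (W t) v₀
        - Real.sin (2 * Real.pi * t) * mink (W t) v₁ := by rw [hfdef]
    linear_combination -hft + hfval t + t * hK0
  have hcg : S * Real.sin (2 * Real.pi * t) * mink (W t) v₀
      + S * Real.cos (2 * Real.pi * t) * mink (W t) v₁ + r * mink (W t) w
      = Ac * Real.cos (2 * Real.pi * t) + Bc * Real.sin (2 * Real.pi * t) := by
    have hgt : g t = S * Real.sin (2 * Real.pi * t) * mink (W t) v₀
        + S * Real.cos (2 * Real.pi * t) * mink (W t) v₁ + r * mink (W t) w := by rw [hgdef]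
    linear_combination -hgt + hgval t
  have hFt : mink (W t) v₀
      = ((f 0 - S * Bc) / (2 * Real.pi * r)) * (r * (Real.cos (2 * Real.pi * t) * (2 * Real.pi)))
        + Bc * S := by
    linear_combination (Real.cos (2*π*t)) * hcf + S * (Real.sin (2*π*t)) * hcg
      + (-(r * Real.sin (2*π*t))) * (h0t t)
      + (S*Bc - (mink (W t) v₀)) * Real.sin_sq_add_cos_sq (2 * Real.pi * t)
      + (-(mink (W t) v₁)*(Real.cos (2*π*t))*(Real.sin (2*π*t))
          - (mink (W t) v₀)*(Real.sin (2*π*t))*(Real.sin (2*π*t))) * hS2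
      + (-(Real.cos (2*π*t))) * hc1
  have hGt : mink (W t) v₁
      = ((f 0 - S * Bc) / (2 * Real.pi * r)) * (r * (-Real.sin (2 * Real.pi * t) * (2 * Real.pi)))
        + Ac * S := by
    linear_combination (-(Real.sin (2*π*t))) * hcf + S * (Real.cos (2*π*t)) * hcg
      + (-(r * Real.cos (2*π*t))) * (h0t t)
      + (S*Ac + (mink (W t) v₁)*r*r - (mink (W t) v₁)*S*S)
          * Real.sin_sq_add_cos_sq (2 * Real.pi * t)
      + (-(mink (W t) v₁) + (mink (W t) v₁)*(Real.sin (2*π*t))*(Real.sin (2*π*t))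
          - (mink (W t) v₀)*(Real.cos (2*π*t))*(Real.sin (2*π*t))) * hS2
      + (Real.sin (2*π*t)) * hc1
  have hHt : mink (W t) w
      = -(Ac * (r * Real.cos (2 * Real.pi * t)) + Bc * (r * Real.sin (2 * Real.pi * t))) := by
    linear_combination (-r) * hcg + S * (h0t t) + (-(mink (W t) w)) * hS2
  rw [show deriv α t = Ad t from (hAhd t).deriv]
  rw [hW0t t]
  rw [hAddef]
  funext i
  simp only [Pi.add_apply, Pi.sub_apply, Pi.smul_apply, smul_eq_mul]
  linear_combination (v₀ i) * hFt + (v₁ i) * hGt + (-(w i)) * hHt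
end
end

section
/- Let r > 0, {v₀,v₁,w} a positive oriented orthonormal system, k₀ = √(1+r²)/r, α(t) = √(1+r²) w + r cos(2πt) v₁ + r sin(2πt) v₀, and W₀(t) = t α̇(t), W₁(t) = α̇(t), W₂(t) = √(1+r²) v₁ + r cos(2πt) w, W₃(t) = √(1+r²) v₀ + r sin(2πt) w. Then the initial values are: W₀(0) = 0, D_tW₀(0) = 2πr v₀; W₁(0) = 2πr v₀, D_tW₁(0) = −4π²r³k₀(k₀v₁ + w); W₂(0) = rk₀v₁ + rw, D_tW₂(0) = 0; W₃(0) = rk₀v₀, D_tW₃(0) = −2πr³(k₀v₁ + w); and the four pairs (Wᵢ(0), D_tWᵢ(0)), i = 0,1,2,3, are linearly independent in ℝ³ × ℝ³ (hence form a basis of the product of the tangent plane of ℍ at α(0) with itself). -/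
noncomputable section

open Real

lemma mink_add_left (u v x : Fin 3 → ℝ) : mink (u + v) x = mink u x + mink v x := by
  simp only [mink, Pi.add_apply]; ring

lemma mink_add_right (u v x : Fin 3 → ℝ) : mink u (v + x) = mink u v + mink u x := by
  simp only [mink, Pi.add_apply]; ring

lemma mink_smul_left (c : ℝ) (u x : Fin 3 → ℝ) : mink (c • u) x = c * mink u x := by
  simp only [mink, Pi.smul_apply, smul_eq_mul]; ring

lemma mink_smul_right (c : ℝ) (u x : Fin 3 → ℝ) : mink u (c • x) = c * mink u x := by
  simp only [mink, Pi.smul_apply, smul_eq_mul]; ring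

lemma mink_comm_s10 (u x : Fin 3 → ℝ) : mink u x = mink x u := by
  simp only [mink]; ring

lemma mink_zero_left (x : Fin 3 → ℝ) : mink 0 x = 0 := by
  simp [mink]

lemma hasDerivAt_rcos (r t : ℝ) :
    HasDerivAt (fun t => r * Real.cos (2 * Real.pi * t))
      (-(2 * Real.pi * r * Real.sin (2 * Real.pi * t))) t := by
  have h2 : HasDerivAt (fun t : ℝ => 2 * Real.pi * t) (2 * Real.pi) t := by
    simpa using (hasDerivAt_id t).const_mul (2 * Real.pi)
  have := ((Real.hasDerivAt_cos (2 * Real.pi * t)).comp t h2).const_mul r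
  exact this.congr_deriv (by ring)

lemma hasDerivAt_rsin (r t : ℝ) :
    HasDerivAt (fun t => r * Real.sin (2 * Real.pi * t))
      (2 * Real.pi * r * Real.cos (2 * Real.pi * t)) t := by
  have h2 : HasDerivAt (fun t : ℝ => 2 * Real.pi * t) (2 * Real.pi) t := by
    simpa using (hasDerivAt_id t).const_mul (2 * Real.pi)
  have := ((Real.hasDerivAt_sin (2 * Real.pi * t)).comp t h2).const_mul r
  exact this.congr_deriv (by ring)

/-- the initial values of W₀, W₁, W₂, W₃ and their covariant derivatives,
and the linear independence of the four pairs of initial values. -/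
theorem stmt_10 (r : ℝ) (hr : 0 < r) (v₀ v₁ w : Fin 3 → ℝ) (hsys : posOrth v₀ v₁ w) :
    let k₀ : ℝ := Real.sqrt (1 + r ^ 2) / r
    let α : ℝ → Fin 3 → ℝ := fun t =>
      Real.sqrt (1 + r ^ 2) • w + (r * Real.cos (2 * Real.pi * t)) • v₁ +
        (r * Real.sin (2 * Real.pi * t)) • v₀
    let W₀ : ℝ → Fin 3 → ℝ := fun t => t • deriv α t
    let W₁ : ℝ → Fin 3 → ℝ := fun t => deriv α t
    let W₂ : ℝ → Fin 3 → ℝ := fun t =>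
      Real.sqrt (1 + r ^ 2) • v₁ + (r * Real.cos (2 * Real.pi * t)) • w
    let W₃ : ℝ → Fin 3 → ℝ := fun t =>
      Real.sqrt (1 + r ^ 2) • v₀ + (r * Real.sin (2 * Real.pi * t)) • w
    W₀ 0 = 0 ∧ covDt α W₀ 0 = (2 * Real.pi * r) • v₀ ∧
    W₁ 0 = (2 * Real.pi * r) • v₀ ∧
    covDt α W₁ 0 = (-(4 * Real.pi ^ 2 * r ^ 3 * k₀)) • (k₀ • v₁ + w) ∧
    W₂ 0 = (r * k₀) • v₁ + r • w ∧ covDt α W₂ 0 = 0 ∧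
    W₃ 0 = (r * k₀) • v₀ ∧
    covDt α W₃ 0 = (-(2 * Real.pi * r ^ 3)) • (k₀ • v₁ + w) ∧
    LinearIndependent ℝ
      ![((W₀ 0, covDt α W₀ 0) : (Fin 3 → ℝ) × (Fin 3 → ℝ)),
        (W₁ 0, covDt α W₁ 0), (W₂ 0, covDt α W₂ 0), (W₃ 0, covDt α W₃ 0)] := by
  obtain ⟨h01, h0w, h1w, h00, h11, hww, -⟩ := hsys
  have h10 : mink v₁ v₀ = 0 := by rw [mink_comm_s10]; exact h01
  have hw0 : mink w v₀ = 0 := by rw [mink_comm_s10]; exact h0w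
  have hw1 : mink w v₁ = 0 := by rw [mink_comm_s10]; exact h1w
  intro k₀ α W₀ W₁ W₂ W₃
  set s : ℝ := Real.sqrt (1 + r ^ 2) with hs_def
  have hrne : r ≠ 0 := ne_of_gt hr
  have hs2 : s ^ 2 = 1 + r ^ 2 := Real.sq_sqrt (by positivity)
  have hspos : 0 < s := Real.sqrt_pos.mpr (by positivity)
  have hpi : (0:ℝ) < Real.pi := Real.pi_pos
  -- derivative of α
  set F : ℝ → Fin 3 → ℝ := fun t =>
    (-(2 * Real.pi * r * Real.sin (2 * Real.pi * t))) • v₁ +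
      (2 * Real.pi * r * Real.cos (2 * Real.pi * t)) • v₀ with hF_def
  have hα : ∀ t, HasDerivAt α (F t) t := fun t =>
    (((hasDerivAt_rcos r t).smul_const v₁).const_add _).add ((hasDerivAt_rsin r t).smul_const v₀)
  have hdα : deriv α = F := funext fun t => (hα t).deriv
  -- second derivative
  set G : ℝ → Fin 3 → ℝ := fun t =>
    (-(4 * Real.pi ^ 2 * r * Real.cos (2 * Real.pi * t))) • v₁ +
      (-(4 * Real.pi ^ 2 * r * Real.sin (2 * Real.pi * t))) • v₀ with hG_def
  have hF : ∀ t, HasDerivAt F (G t) t := by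
    intro t
    have h1 : HasDerivAt (fun t => (-(2 * Real.pi * r * Real.sin (2 * Real.pi * t))) • v₁)
        ((-(4 * Real.pi ^ 2 * r * Real.cos (2 * Real.pi * t))) • v₁) t := by
      have := ((hasDerivAt_rsin (2 * Real.pi * r) t).neg).smul_const v₁
      refine this.congr_deriv ?_
      congr 1; ring
    have h2 : HasDerivAt (fun t => (2 * Real.pi * r * Real.cos (2 * Real.pi * t)) • v₀)
        ((-(4 * Real.pi ^ 2 * r * Real.sin (2 * Real.pi * t))) • v₀) t := by
      have := (hasDerivAt_rcos (2 * Real.pi * r) t).smul_const v₀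
      refine this.congr_deriv ?_
      congr 1; ring
    exact h1.add h2
  have hdF : deriv F = G := funext fun t => (hF t).deriv
  -- values at 0
  have hα0 : α 0 = s • w + r • v₁ := by
    show s • w + (r * Real.cos (2 * Real.pi * 0)) • v₁ + (r * Real.sin (2 * Real.pi * 0)) • v₀
        = s • w + r • v₁
    simp
  have hF0 : F 0 = (2 * Real.pi * r) • v₀ := by
    rw [hF_def]; simp
  have hG0 : G 0 = (-(4 * Real.pi ^ 2 * r)) • v₁ := by
    rw [hG_def]; simp
  -- W₁ = F
  have hW1F : W₁ = F := funext fun t => (hα t).deriv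
  -- W₀ derivative at 0
  have hW0eq : W₀ = fun t => t • F t := funext fun t => by
    show t • deriv α t = t • F t
    rw [hdα]
  have hdW0 : HasDerivAt W₀ (F 0) 0 := by
    rw [hW0eq]
    have := (hasDerivAt_id (0:ℝ)).smul (hF 0)
    exact this.congr_deriv (by simp)
  -- claims
  have c1 : W₀ 0 = 0 := by show (0:ℝ) • deriv α 0 = 0; simp
  have c2 : covDt α W₀ 0 = (2 * Real.pi * r) • v₀ := by
    show deriv W₀ 0 + mink (deriv W₀ 0) (α 0) • α 0 = _
    rw [hdW0.deriv, hF0, hα0]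
    rw [mink_smul_left, mink_add_right, mink_smul_right, mink_smul_right, h0w, h01]
    simp
  have c3 : W₁ 0 = (2 * Real.pi * r) • v₀ := by rw [hW1F, hF0]
  have c4 : covDt α W₁ 0 = (-(4 * Real.pi ^ 2 * r ^ 3 * k₀)) • (k₀ • v₁ + w) := by
    show deriv W₁ 0 + mink (deriv W₁ 0) (α 0) • α 0 = _
    rw [hW1F, hdF, hG0, hα0]
    rw [mink_smul_left, mink_add_right, mink_smul_right, mink_smul_right, h1w, h11]
    show _ = (-(4 * Real.pi ^ 2 * r ^ 3 * (s / r))) • ((s / r) • v₁ + w)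
    match_scalars
    · field_simp
      linear_combination hs2
    · field_simp
      ring
  have c5 : W₂ 0 = (r * k₀) • v₁ + r • w := by
    show s • v₁ + (r * Real.cos (2 * Real.pi * 0)) • w = (r * (s / r)) • v₁ + r • w
    rw [mul_div_cancel₀ _ hrne]
    simp
  have hdW2 : HasDerivAt W₂ 0 0 := by
    have h := ((hasDerivAt_rcos r 0).smul_const w).const_add (s • v₁)
    have : (-(2 * Real.pi * r * Real.sin (2 * Real.pi * 0))) • w = 0 := by simp
    rw [this] at h
    exact h
  have c6 : covDt α W₂ 0 = 0 := by
    show deriv W₂ 0 + mink (deriv W₂ 0) (α 0) • α 0 = 0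
    rw [hdW2.deriv, mink_zero_left]
    simp
  have c7 : W₃ 0 = (r * k₀) • v₀ := by
    show s • v₀ + (r * Real.sin (2 * Real.pi * 0)) • w = (r * (s / r)) • v₀
    rw [mul_div_cancel₀ _ hrne]
    simp
  have hdW3 : HasDerivAt W₃ ((2 * Real.pi * r) • w) 0 := by
    have h := ((hasDerivAt_rsin r 0).smul_const w).const_add (s • v₀)
    have : (2 * Real.pi * r * Real.cos (2 * Real.pi * 0)) • w = (2 * Real.pi * r) • w := by simp
    rw [this] at h
    exact h
  have c8 : covDt α W₃ 0 = (-(2 * Real.pi * r ^ 3)) • (k₀ • v₁ + w) := by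
    show deriv W₃ 0 + mink (deriv W₃ 0) (α 0) • α 0 = _
    rw [hdW3.deriv, hα0]
    rw [mink_smul_left, mink_add_right, mink_smul_right, mink_smul_right, hww, hw1]
    show _ = (-(2 * Real.pi * r ^ 3)) • ((s / r) • v₁ + w)
    match_scalars
    · field_simp
      linear_combination (-1) * hs2
    · field_simp
      ring
  refine ⟨c1, c2, c3, c4, c5, c6, c7, c8, ?_⟩
  rw [c1, c2, c3, c4, c5, c6, c7, c8]
  rw [Fintype.linearIndependent_iff]
  intro g hg
  rw [Fin.sum_univ_four] at hg
  simp only [Matrix.cons_val_zero, Matrix.cons_val_one, Matrix.head_cons,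
    Matrix.cons_val_two, Matrix.tail_cons, Matrix.cons_val_three] at hg
  have hfst := congrArg Prod.fst hg
  have hsnd := congrArg Prod.snd hg
  simp only [Prod.fst_add, Prod.snd_add, Prod.smul_mk, Prod.fst_zero, Prod.snd_zero] at hfst hsnd
  have hk : k₀ = s / r := rfl
  rw [hk] at hfst hsnd
  have e00 := congrArg (fun x => mink x v₀) hfst
  have e01 := congrArg (fun x => mink x v₁) hfst
  have e10 := congrArg (fun x => mink x v₀) hsnd
  have e12 := congrArg (fun x => mink x w) hsnd
  simp only [mink_add_left, mink_smul_left, mink_zero_left, smul_zero, h01, h0w, h1w, h00,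
    h11, hww, h10, hw0, hw1] at e00 e01 e10 e12
  clear hg hfst hsnd
  field_simp at e00 e01 e10 e12
  have h2pr : (0:ℝ) < 2 * π * r := by positivity
  have hg2 : g 2 = 0 := by
    rcases mul_eq_zero.mp (by linear_combination e01 : g 2 * s = 0) with h | h
    · exact h
    · exact absurd h (ne_of_gt hspos)
  have hg0 : g 0 = 0 := by
    rcases mul_eq_zero.mp (by linear_combination e10 : g 0 * (2 * π * r) = 0) with h | h
    · exact h
    · exact absurd h (ne_of_gt h2pr)
  have key : 2 * π * r ^ 2 * g 3 = 0 := by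
    linear_combination r * (2 * π * r * s * e00 - e12) - (2 * π * r ^ 2 * g 3) * hs2
  have hg3 : g 3 = 0 := by
    rcases mul_eq_zero.mp key with h | h
    · exact absurd h (by positivity)
    · exact h
  have hg1 : g 1 = 0 := by
    have h : g 1 * (2 * π * r) = 0 := by linear_combination e00 - s * hg3
    rcases mul_eq_zero.mp h with h | h
    · exact h
    · exact absurd h (ne_of_gt h2pr)
  intro i
  fin_cases i
  · exact hg0
  · exact hg1
  · exact hg2
  · exact hg3
end
end
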